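/- Let d ≥ 2 be an integer. For each i let (ℓ₁ⁱ, …, ℓ_dⁱ) be a full sibling collection, i.e., d pairwise disjoint chords with σ_d(ℓ₁ⁱ) = … = σ_d(ℓ_dⁱ). Suppose that for each j = 1, …, d the chords ℓ_jⁱ converge to a chord ℓ_j in the Hausdorff metric as i → ∞, and suppose ℓ₁ is not critical. Then (ℓ₁, …, ℓ_d) is a full sibling collection: the chords ℓ₁, …, ℓ_d are pairwise disjoint and σ_d(ℓ₁) = … = σ_d(ℓ_d). -/

import Mathlib

open Metric Set Filter

noncomputable section

/-- Angles: the circle `ℝ/ℤ`. -/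
abbrev Angle : Type := AddCircle (1 : ℝ)

/-- The angle map `σ_d : t ↦ d·t` on `ℝ/ℤ`. -/
def sigmaA (d : ℕ) : Angle → Angle := fun a => d • a

/-- The point `exp(2πi a)` of the unit circle in the plane `ℂ` corresponding to an angle. -/
def anglePoint (a : Angle) : ℂ := (AddCircle.toCircle a : ℂ)

/-- A chord is (determined by) an unordered pair of angles; it is degenerate iff
the pair is diagonal. -/
abbrev Chord : Type := Sym2 Angle

/-- The chord as a subset of the plane: the closed segment joining the two
corresponding points of the unit circle. -/
def chordSet (c : Chord) : Set ℂ :=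
  Sym2.lift ⟨fun a b => segment ℝ (anglePoint a) (anglePoint b),
    fun a b => segment_symm ℝ (anglePoint a) (anglePoint b)⟩ c

/-- The image `σ_d(ℓ)` of a chord: the chord on the images of the endpoint angles. -/
def chordMap (d : ℕ) : Chord → Chord := Sym2.map (sigmaA d)

/-- A chord is `σ_d`-critical if its image is degenerate. -/
def ChordCritical (d : ℕ) (c : Chord) : Prop := (chordMap d c).IsDiag

/-- The open unit disk in the plane. -/
def openDisk : Set ℂ := Metric.ball 0 1

/-- Two (distinct) chords cross if they intersect in the open unit disk. -/
def Cross (c₁ c₂ : Chord) : Prop :=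
  c₁ ≠ c₂ ∧ (chordSet c₁ ∩ chordSet c₂ ∩ openDisk).Nonempty

/-- The length of a chord: the length of the shorter arc between its endpoint
angles, normalized so that the whole circle has length `1` (this is exactly
the distance in `ℝ/ℤ`). -/
def chordLength (c : Chord) : ℝ :=
  Sym2.lift ⟨fun a b => dist a b, fun a b => dist_comm a b⟩ c

/-- The Hausdorff distance between two chords, regarded as compact subsets of the
plane. -/
def chordDist (c₁ c₂ : Chord) : ℝ := hausdorffDist (chordSet c₁) (chordSet c₂)

/-- A lamination: a family of chords (leaves) such that no two distinct leaves cross,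
every point of the unit circle is a degenerate leaf, and the union of all leaves is a
compact subset of the plane. -/
structure Lamination where
  leaves : Set Chord
  no_cross : ∀ c₁ ∈ leaves, ∀ c₂ ∈ leaves, ¬ Cross c₁ c₂
  circle_deg : ∀ a : Angle, Sym2.diag a ∈ leaves
  compact_union : IsCompact (⋃ c ∈ leaves, chordSet c)

/-- The union `Λ⁺` of all leaves of a lamination. -/
def lamPlus (Λ : Lamination) : Set ℂ := ⋃ c ∈ Λ.leaves, chordSet c

/-- A full sibling collection: `d` pairwise disjoint chords with equal `σ_d`-images. -/
def FullSibling (d : ℕ) (L : Fin d → Chord) : Prop :=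
  (∀ i j, i ≠ j → Disjoint (chordSet (L i)) (chordSet (L j))) ∧
  ∀ i j, chordMap d (L i) = chordMap d (L j)

/-- Sibling `σ_d`-invariance of a lamination. -/
structure SiblingInvariant (d : ℕ) (Λ : Lamination) : Prop where
  forward : ∀ c ∈ Λ.leaves, chordMap d c ∈ Λ.leaves
  pullback : ∀ c ∈ Λ.leaves, ∃ c' ∈ Λ.leaves, chordMap d c' = c
  sibling : ∀ c ∈ Λ.leaves, ¬ ChordCritical d c →
    ∃ L : Fin d → Chord, (∀ i, L i ∈ Λ.leaves) ∧ (∃ i, L i = c) ∧ FullSibling d L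

/-- A lamination is nonempty if it has a nondegenerate leaf. -/
def LamNonempty (Λ : Lamination) : Prop := ∃ c ∈ Λ.leaves, ¬ c.IsDiag

/-- A chief: a nonempty sibling `σ_d`-invariant lamination that is minimal by
inclusion among nonempty sibling `σ_d`-invariant laminations. -/
def IsChief (d : ℕ) (Λ : Lamination) : Prop :=
  SiblingInvariant d Λ ∧ LamNonempty Λ ∧
  ∀ Λ' : Lamination, SiblingInvariant d Λ' → LamNonempty Λ' →
    Λ'.leaves ⊆ Λ.leaves → Λ'.leaves = Λ.leaves

/-- A chord `c` is an isolated leaf of `Λ` if it is not the limit (in the Hausdorff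
metric on compact subsets of the plane) of a sequence of leaves of `Λ` distinct
from `c`. -/
def IsIsolatedLeaf (Λ : Lamination) (c : Chord) : Prop :=
  ¬ ∃ f : ℕ → Chord, (∀ n, f n ∈ Λ.leaves ∧ f n ≠ c) ∧
      Tendsto (fun n => chordDist (f n) c) atTop (nhds 0)

/-- A lamination is perfect if none of its leaves is isolated. -/
def LamPerfect (Λ : Lamination) : Prop := ∀ c ∈ Λ.leaves, ¬ IsIsolatedLeaf Λ c

/-- A gap of `Λ`: the closure of a connected component of `𝔻 ∖ Λ⁺`. -/
def IsGap (Λ : Lamination) (G : Set ℂ) : Prop :=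
  ∃ x ∈ openDisk \ lamPlus Λ,
    G = closure (connectedComponentIn (openDisk \ lamPlus Λ) x)

/-- The set of angles whose circle points lie in `G` (i.e. `G ∩ 𝕊¹` as angles). -/
def gapAngles (G : Set ℂ) : Set Angle := {a | anglePoint a ∈ G}

/-- `σ_d(G)` for a gap or leaf `G`: the convex hull of `σ_d(G ∩ 𝕊¹)`. -/
def gapImage (d : ℕ) (G : Set ℂ) : Set ℂ :=
  convexHull ℝ (anglePoint '' (sigmaA d '' gapAngles G))

/-- A gap (as a subset of the plane) is finite if it meets the circle in finitely
many points. -/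
def FiniteGapSet (G : Set ℂ) : Prop := (gapAngles G).Finite

/-- A gap is infinite if it meets the circle in infinitely many points. -/
def InfiniteGapSet (G : Set ℂ) : Prop := (gapAngles G).Infinite

/-- A chord `e` is an edge of `G` if (as a segment) it is a maximal straight segment
contained in the boundary of `G`. -/
def IsEdge (G : Set ℂ) (e : Chord) : Prop :=
  ¬ e.IsDiag ∧ chordSet e ⊆ frontier G ∧
  ∀ e' : Chord, chordSet e ⊆ chordSet e' → chordSet e' ⊆ frontier G → e' = e

/-- `G` has a `σ_d`-critical edge. -/
def HasCriticalEdge (d : ℕ) (G : Set ℂ) : Prop :=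
  ∃ e : Chord, ChordCritical d e ∧ IsEdge G e

/-- A lap of `Λ`: a finite gap, or (the underlying set of) a nondegenerate leaf not
contained in the boundary of a finite gap. -/
def IsLap (Λ : Lamination) (G : Set ℂ) : Prop :=
  (IsGap Λ G ∧ FiniteGapSet G) ∨
  (∃ c ∈ Λ.leaves, ¬ c.IsDiag ∧ G = chordSet c ∧
     ∀ H : Set ℂ, IsGap Λ H → FiniteGapSet H → ¬ G ⊆ frontier H)

/-- A gap/lap is invariant if `σ_d(G) = G`. -/
def GapInvariant (d : ℕ) (G : Set ℂ) : Prop := gapImage d G = G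

/-- A gap/lap is periodic if `σ_d^n(G) = G` for some `n ≥ 1`. -/
def GapPeriodic (d : ℕ) (G : Set ℂ) : Prop := ∃ n, 1 ≤ n ∧ (gapImage d)^[n] G = G

/-- A gap/lap is periodic of (exact) period `n`. -/
def GapPeriod (d n : ℕ) (G : Set ℂ) : Prop :=
  1 ≤ n ∧ (gapImage d)^[n] G = G ∧ ∀ m, 1 ≤ m → m < n → (gapImage d)^[m] G ≠ G

/-- Non-strict cyclic betweenness on the circle `ℝ/ℤ`. -/
def BtwA (a b c : Angle) : Prop :=
  ∃ x y z : ℝ, (x : Angle) = a ∧ (y : Angle) = b ∧ (z : Angle) = c ∧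
    x ≤ y ∧ y ≤ z ∧ z ≤ x + 1

/-- A `k`-periodic gap `G` has degree one: `σ_d^k` maps `G ∩ 𝕊¹` onto itself
preserving the non-strict cyclic order of the circle. -/
def DegreeOneOn (d k : ℕ) (G : Set ℂ) : Prop :=
  (sigmaA d)^[k] '' gapAngles G = gapAngles G ∧
  ∀ a ∈ gapAngles G, ∀ b ∈ gapAngles G, ∀ c ∈ gapAngles G,
    BtwA a b c → BtwA ((sigmaA d)^[k] a) ((sigmaA d)^[k] b) ((sigmaA d)^[k] c)

/-- An angle is `σ_d`-periodic. -/
def AnglePeriodic (d : ℕ) (x : Angle) : Prop := ∃ n, 1 ≤ n ∧ (sigmaA d)^[n] x = x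

/-- An angle is `σ_d`-preperiodic. -/
def AnglePreperiodic (d : ℕ) (x : Angle) : Prop :=
  ∃ m : ℕ, AnglePeriodic d ((sigmaA d)^[m] x)

/-- Two subsets of the plane share an edge. -/
def SharesEdge (G H : Set ℂ) : Prop := ∃ e : Chord, IsEdge G e ∧ IsEdge H e

/-- A flower-like set of a cubic sibling `σ₃`-invariant lamination `Λ`: either `{U}`
for an infinite invariant gap `U` of `Λ`, or, given an invariant lap `G` of `Λ` such
that some infinite gap of `Λ` shares an edge with `G`, the collection consisting of
`G` together with all periodic infinite gaps of `Λ` sharing an edge with `G`. -/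
def IsFlowerLike (Λ : Lamination) (F : Set (Set ℂ)) : Prop :=
  (∃ U, IsGap Λ U ∧ InfiniteGapSet U ∧ GapInvariant 3 U ∧ F = {U}) ∨
  (∃ G, IsLap Λ G ∧ GapInvariant 3 G ∧
    (∃ H, IsGap Λ H ∧ InfiniteGapSet H ∧ SharesEdge G H) ∧
    F = insert G {H | IsGap Λ H ∧ InfiniteGapSet H ∧ GapPeriodic 3 H ∧ SharesEdge G H})

/-- A lamination is compatible with a flower-like set `F` if no leaf of the
lamination crosses an edge of a gap from `F`. -/
def CompatibleWithFlower (Λ : Lamination) (F : Set (Set ℂ)) : Prop :=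
  ∀ c ∈ Λ.leaves, ∀ G ∈ F, ∀ e : Chord, IsEdge G e → ¬ Cross c e

/-- A central chief: a cubic chief compatible with some flower-like set of some
cubic sibling `σ₃`-invariant lamination. -/
def CentralChief (Λ : Lamination) : Prop :=
  IsChief 3 Λ ∧ ∃ (Λ' : Lamination) (F : Set (Set ℂ)),
    SiblingInvariant 3 Λ' ∧ IsFlowerLike Λ' F ∧ CompatibleWithFlower Λ F

/-- A cubic critical portrait: an (unordered) pair of non-crossing nondegenerate
`σ₃`-critical chords. -/
structure CritPortrait where
  c1 : Chord
  c2 : Chord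
  nd1 : ¬ c1.IsDiag
  nd2 : ¬ c2.IsDiag
  crit1 : ChordCritical 3 c1
  crit2 : ChordCritical 3 c2
  nocross : ¬ Cross c1 c2

/-- A critical portrait is compatible with a lamination if neither of its chords
crosses any leaf. -/
def PortraitCompatible (K : CritPortrait) (Λ : Lamination) : Prop :=
  ∀ c ∈ Λ.leaves, ¬ Cross K.c1 c ∧ ¬ Cross K.c2 c

/-- Convergence of a sequence of laminations: the sets of leaves converge in the
Hausdorff metric of the space of chords. -/
def LamTendsto (Λi : ℕ → Lamination) (Λ : Lamination) : Prop :=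
  ∀ ε > (0:ℝ), ∀ᶠ i in atTop,
    (∀ c ∈ (Λi i).leaves, ∃ c' ∈ Λ.leaves, chordDist c c' < ε) ∧
    (∀ c' ∈ Λ.leaves, ∃ c ∈ (Λi i).leaves, chordDist c c' < ε)

/-- The iterated `σ_d`-pullbacks of a chord `l` inside `Λ`. -/
def pullbackSet (d : ℕ) (Λ : Lamination) (l : Chord) : Set Chord :=
  {c | c ∈ Λ.leaves ∧ ∃ n : ℕ, (chordMap d)^[n] c = l}

/-- `𝒢(l)`: all iterated pullbacks of `l` in `Λ` together with all nondegenerate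
forward images of `l`. -/
def grandOrbit (d : ℕ) (Λ : Lamination) (l : Chord) : Set Chord :=
  pullbackSet d Λ l ∪ {c | ∃ n, 1 ≤ n ∧ c = (chordMap d)^[n] l ∧ ¬ c.IsDiag}

/-- A family of chords is dense in a lamination: every leaf is the limit of chords
from the family in the Hausdorff metric. -/
def DenseIn (S : Set Chord) (Λ : Lamination) : Prop :=
  ∀ c ∈ Λ.leaves, ∀ ε > (0:ℝ), ∃ c' ∈ S, chordDist c' c < ε

/-- Convergence of critical portraits: the critical chords converge in the
Hausdorff metric. -/
def PortraitTendsto (Ki : ℕ → CritPortrait) (K : CritPortrait) : Prop :=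
  Tendsto (fun i => chordDist (Ki i).c1 K.c1) atTop (nhds 0) ∧
  Tendsto (fun i => chordDist (Ki i).c2 K.c2) atTop (nhds 0)

end


noncomputable section StmtTwoHelpers

open Sym2 in
lemma sym2_mk_out (e : Chord) : s(e.out.1, e.out.2) = e := by
  rw [Sym2.mk]; exact e.out_eq

lemma norm_anglePoint (a : Angle) : ‖anglePoint a‖ = 1 := by
  rw [anglePoint]; exact Circle.norm_coe _

lemma continuous_anglePoint : Continuous anglePoint :=
  continuous_subtype_val.comp AddCircle.continuous_toCircle

lemma anglePoint_injective : Function.Injective anglePoint :=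
  fun a b h => AddCircle.injective_toCircle one_ne_zero (Subtype.ext h)

lemma continuous_sigmaA (d : ℕ) : Continuous (sigmaA d) :=
  continuous_id.nsmul d

lemma circle_mem_segment {P Q z : ℂ} (hP : ‖P‖ = 1) (hQ : ‖Q‖ = 1)
    (hz : z ∈ segment ℝ P Q) (hz1 : ‖z‖ = 1) : z = P ∨ z = Q := by
  obtain ⟨a, b, ha, hb, hab, rfl⟩ := hz
  rcases ha.eq_or_lt with h | h
  · right; rw [← h, zero_smul, zero_add]
    have hb1 : b = 1 := by linarith
    rw [hb1, one_smul]
  rcases hb.eq_or_lt with h' | h'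
  · left; rw [← h', zero_smul, add_zero]
    have ha1 : a = 1 := by linarith
    rw [ha1, one_smul]
  by_cases hPQ : P = Q
  · subst hPQ; left; rw [← add_smul, hab, one_smul]
  · exfalso
    have := norm_combo_lt_of_ne hP.le hQ.le hPQ h h' hab
    rw [hz1] at this; exact lt_irrefl _ this

lemma circle_collinear {P Q R : ℂ} (hP : ‖P‖ = 1) (hQ : ‖Q‖ = 1) (hR : ‖R‖ = 1)
    (μ : ℝ) (h : R = P + μ • (Q - P)) : R = P ∨ R = Q := by
  rcases le_or_gt μ 0 with hμ | hμ
  · rcases eq_or_lt_of_le hμ with h0 | h0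
    · left; rw [h, h0, zero_smul, add_zero]
    · have h1μ : (0:ℝ) < 1 - μ := by linarith
      have hne : ((1:ℂ) - μ) ≠ 0 := by
        intro hc
        have : (1:ℝ) - μ = 0 := by exact_mod_cast hc
        linarith
      have hPc : P = (1/(1-μ)) • R + (-μ/(1-μ)) • Q := by
        rw [h]; simp only [Complex.real_smul]; push_cast; field_simp; ring
      by_cases hRQ : R = Q
      · right; exact hRQ
      · exfalso
        have hsum : (1/(1-μ)) + (-μ/(1-μ)) = 1 := by field_simp; ring
        have := norm_combo_lt_of_ne hR.le hQ.le hRQ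
          (by positivity) (div_pos (by linarith) h1μ) hsum
        rw [← hPc, hP] at this; exact lt_irrefl _ this
  · rcases le_or_gt μ 1 with hμ1 | hμ1
    · have : R ∈ segment ℝ P Q := by
        rw [segment_eq_image']
        exact ⟨μ, ⟨hμ.le, hμ1⟩, h.symm⟩
      exact circle_mem_segment hP hQ this hR
    · have hQc : Q = (1 - 1/μ) • P + (1/μ) • R := by
        have hμ0 : ((μ:ℂ)) ≠ 0 := by exact_mod_cast hμ.ne'
        rw [h]; simp only [Complex.real_smul]; push_cast; field_simp; ring
      by_cases hPR : P = R
      · right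
        rw [hQc, ← hPR, ← add_smul]
        norm_num
      · exfalso
        have h1 : (0:ℝ) < 1 - 1/μ := by
          have : 1/μ < 1 := by rw [div_lt_one (by linarith)]; linarith
          linarith
        have h2 : (0:ℝ) < 1/μ := by positivity
        have := norm_combo_lt_of_ne hP.le hR.le hPR h1 h2 (by ring)
        rw [← hQc, hQ] at this; exact lt_irrefl _ this

/-! ### Planar cross products -/

def crossC (v w : ℂ) : ℝ := v.re * w.im - v.im * w.re

lemma crossC_continuous : Continuous fun p : ℂ × ℂ => crossC p.1 p.2 := by
  unfold crossC; fun_prop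

lemma cramer_aux {v w D : ℂ} (hvw : crossC v w ≠ 0)
    (h1 : crossC D v = 0) (h2 : crossC D w = 0) : D = 0 := by
  unfold crossC at *
  have hre : D.re * (v.re * w.im - v.im * w.re) = 0 := by linear_combination v.re * h2 - w.re * h1
  have him : D.im * (v.re * w.im - v.im * w.re) = 0 := by linear_combination v.im * h2 - w.im * h1
  apply Complex.ext
  · simpa [hvw] using mul_eq_zero.1 hre
  · simpa [hvw] using mul_eq_zero.1 him

lemma cramer {v w c : ℂ} (h : crossC v w ≠ 0) :
    (crossC c w / crossC v w) • v - (crossC c v / crossC v w) • w = c := by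
  unfold crossC at *
  apply Complex.ext <;>
    simp only [Complex.sub_re, Complex.sub_im, Complex.real_smul, Complex.mul_re, Complex.mul_im,
      Complex.ofReal_re, Complex.ofReal_im] <;>
    simp only [zero_mul, sub_zero, add_zero] <;> rw [div_mul_eq_mul_div, div_mul_eq_mul_div, ← sub_div, div_eq_iff h] <;> ring

lemma crossC_zero_parallel {v w : ℂ} (hv : v ≠ 0) (h : crossC v w = 0) :
    ∃ μ : ℝ, w = μ • v := by
  refine ⟨(w.re * v.re + w.im * v.im) / (v.re^2 + v.im^2), ?_⟩
  have hv2 : v.re^2 + v.im^2 ≠ 0 := by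
    intro hc
    have h1 : v.re = 0 ∧ v.im = 0 := by
      constructor <;> nlinarith [sq_nonneg v.re, sq_nonneg v.im]
    exact hv (Complex.ext (by simp [h1.1]) (by simp [h1.2]))
  unfold crossC at h
  apply Complex.ext
  · rw [Complex.smul_re, smul_eq_mul, div_mul_eq_mul_div, eq_div_iff hv2]; linear_combination (-v.im) * h
  · rw [Complex.smul_im, smul_eq_mul, div_mul_eq_mul_div, eq_div_iff hv2]; linear_combination v.re * h

lemma crossC_eq {v w c : ℂ} {t u : ℝ} (h : t • v - u • w = c) :
    t * crossC v w = crossC c w ∧ u * crossC v w = crossC c v := by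
  subst h
  unfold crossC
  constructor <;>
  · simp only [Complex.sub_re, Complex.sub_im, Complex.smul_re, Complex.smul_im,
      smul_eq_mul]
    ring

/-! ### Chord sets -/

lemma chordSet_mk (a b : Angle) :
    chordSet s(a,b) = segment ℝ (anglePoint a) (anglePoint b) := rfl

lemma isCompact_seg (x y : ℂ) : IsCompact (segment ℝ x y) := by
  rw [segment_eq_image]
  exact isCompact_Icc.image (by fun_prop)

lemma chordSet_compact (c : Chord) : IsCompact (chordSet c) := by
  induction c using Sym2.ind with
  | _ x y => exact isCompact_seg _ _

lemma chordSet_nonempty (c : Chord) : (chordSet c).Nonempty := by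
  induction c using Sym2.ind with
  | _ x y => exact ⟨_, left_mem_segment ℝ _ _⟩

lemma dist_combo {a b : ℝ} (ha : 0 ≤ a) (hb : 0 ≤ b) (hab : a + b = 1) (P Q P' Q' : ℂ) :
    dist (a•P + b•Q) (a•P' + b•Q') ≤ max (dist P P') (dist Q Q') := by
  rw [dist_eq_norm]
  have h1 : a•P + b•Q - (a•P' + b•Q') = a•(P-P') + b•(Q-Q') := by module
  rw [h1]
  calc ‖a•(P-P') + b•(Q-Q')‖ ≤ a*‖P-P'‖ + b*‖Q-Q'‖ := by
        simpa [norm_smul, abs_of_nonneg ha, abs_of_nonneg hb] using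
          norm_add_le (a•(P-P')) (b•(Q-Q'))
    _ ≤ a * max (dist P P') (dist Q Q') + b * max (dist P P') (dist Q Q') := by
        gcongr
        · rw [← dist_eq_norm]; exact le_max_left _ _
        · rw [← dist_eq_norm]; exact le_max_right _ _
    _ = max (dist P P') (dist Q Q') := by rw [← add_mul, hab, one_mul]

lemma hd_segment_le (P Q P' Q' : ℂ) :
    hausdorffDist (segment ℝ P Q) (segment ℝ P' Q') ≤ max (dist P P') (dist Q Q') := by
  apply hausdorffDist_le_of_mem_dist (le_max_of_le_left dist_nonneg)
  · rintro x ⟨a, b, ha, hb, hab, rfl⟩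
    exact ⟨a•P' + b•Q', ⟨a, b, ha, hb, hab, rfl⟩, dist_combo ha hb hab P Q P' Q'⟩
  · rintro x ⟨a, b, ha, hb, hab, rfl⟩
    refine ⟨a•P + b•Q, ⟨a, b, ha, hb, hab, rfl⟩, ?_⟩
    rw [dist_comm]
    exact dist_combo ha hb hab P Q P' Q'

lemma chord_edist_ne_top (c₁ c₂ : Chord) :
    EMetric.hausdorffEdist (chordSet c₁) (chordSet c₂) ≠ ⊤ :=
  hausdorffEdist_ne_top_of_nonempty_of_bounded (chordSet_nonempty c₁) (chordSet_nonempty c₂)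
    (chordSet_compact c₁).isBounded (chordSet_compact c₂).isBounded

lemma chordSet_eq_of_hd_le_zero {c₁ c₂ : Chord} (h : chordDist c₁ c₂ ≤ 0) :
    chordSet c₁ = chordSet c₂ := by
  have fin := chord_edist_ne_top c₁ c₂
  have h0 : chordDist c₁ c₂ = 0 := le_antisymm h hausdorffDist_nonneg
  rw [chordDist, hausdorffDist] at h0
  rcases (ENNReal.toReal_eq_zero_iff _).1 h0 with h | h
  · exact (EMetric.hausdorffEdist_zero_iff_eq_of_closed (chordSet_compact c₁).isClosed
      (chordSet_compact c₂).isClosed).1 h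
  · exact absurd h fin

lemma segment_eq_endpoints {a b a' b' : Angle}
    (h : segment ℝ (anglePoint a) (anglePoint b) = segment ℝ (anglePoint a') (anglePoint b')) :
    s(a,b) = s(a',b') := by
  have key : ∀ x y z w : Angle,
      segment ℝ (anglePoint x) (anglePoint y) = segment ℝ (anglePoint z) (anglePoint w) →
      z = x ∨ z = y := by
    intro x y z w hxy
    have : anglePoint z ∈ segment ℝ (anglePoint x) (anglePoint y) := by
      rw [hxy]; exact left_mem_segment ℝ _ _
    rcases circle_mem_segment (norm_anglePoint x) (norm_anglePoint y) this (norm_anglePoint z)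
      with h | h
    · exact Or.inl (anglePoint_injective h)
    · exact Or.inr (anglePoint_injective h)
  have h1 := key a b a' b' h
  have h2 := key b a b' a' (by rw [segment_symm, h, segment_symm])
  have h3 := key a' b' a b h.symm
  have h4 := key b' a' b a (by rw [segment_symm, ← h, segment_symm])
  rw [Sym2.eq_iff]
  tauto

lemma chord_extract {c : ℕ → Chord} {a b : Angle}
    (h : Tendsto (fun n => chordDist (c n) s(a,b)) atTop (nhds 0)) :
    ∃ (φ : ℕ → ℕ) (p q : ℕ → Angle), StrictMono φ ∧
      (∀ n, s(p n, q n) = c (φ n)) ∧ Tendsto p atTop (nhds a) ∧ Tendsto q atTop (nhds b) := by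
  set x : ℕ → Angle × Angle := fun n => (c n).out with hx
  obtain ⟨pq, φ, hφ, hconv⟩ := CompactSpace.tendsto_subseq x
  have hp : Tendsto (fun n => (x (φ n)).1) atTop (nhds pq.1) :=
    ((continuous_fst.tendsto pq).comp hconv)
  have hq : Tendsto (fun n => (x (φ n)).2) atTop (nhds pq.2) :=
    ((continuous_snd.tendsto pq).comp hconv)
  have hcx : ∀ n, c (φ n) = s((x (φ n)).1, (x (φ n)).2) := fun n => (sym2_mk_out _).symm
  have hle : ∀ n, chordDist s(pq.1, pq.2) s(a,b) ≤
      max (dist (anglePoint pq.1) (anglePoint (x (φ n)).1))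
          (dist (anglePoint pq.2) (anglePoint (x (φ n)).2))
        + chordDist (c (φ n)) s(a,b) := by
    intro n
    calc chordDist s(pq.1, pq.2) s(a,b)
        ≤ chordDist s(pq.1, pq.2) (c (φ n)) + chordDist (c (φ n)) s(a,b) :=
          hausdorffDist_triangle (chord_edist_ne_top _ _)
      _ ≤ _ := by
          gcongr
          rw [chordDist, hcx n, chordSet_mk, chordSet_mk]
          exact hd_segment_le _ _ _ _
  have htend : Tendsto (fun n =>
      max (dist (anglePoint pq.1) (anglePoint (x (φ n)).1))
          (dist (anglePoint pq.2) (anglePoint (x (φ n)).2))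
        + chordDist (c (φ n)) s(a,b)) atTop (nhds 0) := by
    have t1 : Tendsto (fun n => dist (anglePoint pq.1) (anglePoint (x (φ n)).1)) atTop
        (nhds 0) := by
      have := (tendsto_const_nhds (x := anglePoint pq.1) (f := atTop (α := ℕ))).dist
        ((continuous_anglePoint.tendsto _).comp hp)
      simpa using this
    have t2 : Tendsto (fun n => dist (anglePoint pq.2) (anglePoint (x (φ n)).2)) atTop
        (nhds 0) := by
      have := (tendsto_const_nhds (x := anglePoint pq.2) (f := atTop (α := ℕ))).dist
        ((continuous_anglePoint.tendsto _).comp hq)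
      simpa using this
    have t3 : Tendsto (fun n => chordDist (c (φ n)) s(a,b)) atTop (nhds 0) :=
      h.comp hφ.tendsto_atTop
    simpa using (t1.max t2).add t3
  have hd0 : chordDist s(pq.1, pq.2) s(a,b) ≤ 0 := ge_of_tendsto' htend hle
  have hset : chordSet s(pq.1, pq.2) = chordSet s(a,b) := chordSet_eq_of_hd_le_zero hd0
  rw [chordSet_mk, chordSet_mk] at hset
  have hmk : s(pq.1, pq.2) = s(a,b) := segment_eq_endpoints hset
  rw [Sym2.eq_iff] at hmk
  rcases hmk with ⟨h1, h2⟩ | ⟨h1, h2⟩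
  · exact ⟨φ, fun n => (x (φ n)).1, fun n => (x (φ n)).2, hφ,
      fun n => (hcx n).symm, h1 ▸ hp, h2 ▸ hq⟩
  · refine ⟨φ, fun n => (x (φ n)).2, fun n => (x (φ n)).1, hφ,
      fun n => ?_, h2 ▸ hq, h1 ▸ hp⟩
    rw [Sym2.eq_swap]; exact (hcx n).symm

/-! ### Torsion of the circle -/

lemma torsion_finite (d : ℕ) (hd : 0 < d) : {z : Angle | d • z = 0}.Finite := by
  have hsub : {z : Angle | d • z = 0} ⊆
      (fun m : Fin d => ((((m : ℕ) : ℝ)/(d:ℝ) : ℝ) : Angle)) '' Set.univ := by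
    intro z hz
    induction z using QuotientAddGroup.induction_on with
    | H x =>
      simp only [Set.mem_setOf_eq] at hz
      rw [← AddCircle.coe_nsmul, AddCircle.coe_eq_zero_iff] at hz
      obtain ⟨n, hn⟩ := hz
      simp only [zsmul_eq_mul, mul_one, nsmul_eq_mul] at hn
      have hdR : (d:ℝ) ≠ 0 := by exact_mod_cast hd.ne'
      have hx : x = (n : ℝ) / d := by field_simp; linarith
      have hd' : (d:ℤ) ≠ 0 := by exact_mod_cast hd.ne'
      set r := n % d with hr
      set q := n / (d:ℤ) with hq
      have hr0 : 0 ≤ r := Int.emod_nonneg n hd'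
      have hrd : r < d := Int.emod_lt_of_pos n (by exact_mod_cast hd)
      have htn : ((r.toNat : ℝ)) = (r:ℝ) := by
        exact_mod_cast congrArg (Int.cast : ℤ → ℝ) (Int.toNat_of_nonneg hr0)
      have hnd : n = d * q + r := (Int.mul_ediv_add_emod n d).symm
      have hxq : x = (q:ℝ) + (r:ℝ)/d := by
        rw [hx]
        field_simp
        rw [hnd]; push_cast; ring
      have hq0 : (((q:ℝ)) : Angle) = 0 := (AddCircle.coe_eq_zero_iff (1:ℝ)).2 ⟨q, by simp⟩
      refine ⟨⟨r.toNat, by omega⟩, Set.mem_univ _, ?_⟩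
      simp only
      rw [htn, hxq, AddCircle.coe_add, hq0, zero_add]
  exact ((Set.finite_univ.image _).subset hsub)

lemma eventually_eq_of_torsion {d : ℕ} (hd : 0 < d) {u v : ℕ → Angle}
    (h : ∀ n, d • u n = d • v n)
    (huv : Tendsto (fun n => u n - v n) atTop (nhds 0)) : ∀ᶠ n in atTop, u n = v n := by
  set T : Set Angle := {z : Angle | d • z = 0} with hT
  have hfin : T.Finite := torsion_finite d hd
  have hS : IsClosed (T \ {0}) := (hfin.subset diff_subset).isClosed
  have h0 : (0 : Angle) ∈ (T \ {0})ᶜ := by simp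
  have hev : ∀ᶠ n in atTop, u n - v n ∈ (T \ {0})ᶜ :=
    huv.eventually (hS.isOpen_compl.mem_nhds h0)
  filter_upwards [hev] with n hn
  have hmem : u n - v n ∈ T := by
    simp only [hT, Set.mem_setOf_eq, smul_sub, h n, sub_self]
  by_contra hne
  exact hn ⟨hmem, by simpa [sub_eq_zero] using hne⟩

lemma chordMap_mk (d : ℕ) (a b : Angle) : chordMap d s(a,b) = s(d • a, d • b) := by
  rw [chordMap, Sym2.map_pair_eq]; rfl

lemma sibling_pair_extract (d : ℕ) (hd : 2 ≤ d) (L : ℕ → Fin d → Chord)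
    (hL : ∀ i, FullSibling d (L i)) (l : Fin d → Chord)
    (hconv : ∀ j : Fin d, Tendsto (fun i => chordDist (L i j) (l j)) atTop (nhds 0))
    (i j : Fin d) :
    ∃ (φ : ℕ → ℕ) (p q r s : ℕ → Angle) (a b r0 s0 : Angle), StrictMono φ ∧
      (∀ n, s(p n, q n) = L (φ n) i) ∧ (∀ n, s(r n, s n) = L (φ n) j) ∧
      s(a,b) = l i ∧ s(r0,s0) = l j ∧
      Tendsto p atTop (nhds a) ∧ Tendsto q atTop (nhds b) ∧
      Tendsto r atTop (nhds r0) ∧ Tendsto s atTop (nhds s0) ∧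
      (∀ n, d • p n = d • r n) ∧ (∀ n, d • q n = d • s n) := by
  obtain ⟨a, b, hab⟩ : ∃ a b, s(a,b) = l i := ⟨(l i).out.1, (l i).out.2, sym2_mk_out _⟩
  obtain ⟨r0, s0, hrs⟩ : ∃ r0 s0, s(r0,s0) = l j := ⟨(l j).out.1, (l j).out.2, sym2_mk_out _⟩
  obtain ⟨φ₁, p₁, q₁, hφ₁, hpq₁, hp₁, hq₁⟩ := chord_extract (c := fun n => L n i) (a := a) (b := b)
    (by rw [hab]; exact hconv i)
  obtain ⟨φ₂, r₂, s₂, hφ₂, hrs₂, hr₂, hs₂⟩ :=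
    chord_extract (c := fun n => L (φ₁ n) j) (a := r0) (b := s0)
    (by rw [hrs]; exact (hconv j).comp hφ₁.tendsto_atTop)
  -- combined subsequence
  set ψ : ℕ → ℕ := φ₁ ∘ φ₂ with hψ
  have hψm : StrictMono ψ := hφ₁.comp hφ₂
  set p : ℕ → Angle := p₁ ∘ φ₂
  set q : ℕ → Angle := q₁ ∘ φ₂
  have hpq : ∀ n, s(p n, q n) = L (ψ n) i := fun n => hpq₁ (φ₂ n)
  have hp : Tendsto p atTop (nhds a) := hp₁.comp hφ₂.tendsto_atTop
  have hq : Tendsto q atTop (nhds b) := hq₁.comp hφ₂.tendsto_atTop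
  -- sibling images agree along the sequence
  have himg : ∀ n, (d • p n = d • r₂ n ∧ d • q n = d • s₂ n) ∨
      (d • p n = d • s₂ n ∧ d • q n = d • r₂ n) := by
    intro n
    have h1 : chordMap d (L (ψ n) i) = chordMap d (L (ψ n) j) := (hL (ψ n)).2 i j
    have h2 : (L (ψ n) j) = s(r₂ n, s₂ n) := (hrs₂ n).symm
    rw [← hpq n, h2, chordMap_mk, chordMap_mk, Sym2.eq_iff] at h1
    exact h1
  have hcase : (∃ᶠ n in atTop, d • p n = d • r₂ n ∧ d • q n = d • s₂ n) ∨
      (∃ᶠ n in atTop, d • p n = d • s₂ n ∧ d • q n = d • r₂ n) := by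
    by_contra hc
    rw [not_or] at hc
    rw [Filter.not_frequently, Filter.not_frequently] at hc
    rcases (hc.1.and hc.2).exists with ⟨n, hn1, hn2⟩
    rcases himg n with h | h
    · exact hn1 h
    · exact hn2 h
  rcases hcase with hfreq | hfreq
  · obtain ⟨φ₃, hφ₃, hsel⟩ := extraction_of_frequently_atTop hfreq
    exact ⟨ψ ∘ φ₃, p ∘ φ₃, q ∘ φ₃, r₂ ∘ φ₃, s₂ ∘ φ₃, a, b, r0, s0,
      hψm.comp hφ₃, fun n => hpq (φ₃ n), fun n => hrs₂ (φ₃ n), hab, hrs,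
      hp.comp hφ₃.tendsto_atTop, hq.comp hφ₃.tendsto_atTop,
      hr₂.comp hφ₃.tendsto_atTop, hs₂.comp hφ₃.tendsto_atTop,
      fun n => (hsel n).1, fun n => (hsel n).2⟩
  · obtain ⟨φ₃, hφ₃, hsel⟩ := extraction_of_frequently_atTop hfreq
    refine ⟨ψ ∘ φ₃, p ∘ φ₃, q ∘ φ₃, s₂ ∘ φ₃, r₂ ∘ φ₃, a, b, s0, r0,
      hψm.comp hφ₃, fun n => hpq (φ₃ n), fun n => ?_, hab, by rw [Sym2.eq_swap]; exact hrs,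
      hp.comp hφ₃.tendsto_atTop, hq.comp hφ₃.tendsto_atTop,
      hs₂.comp hφ₃.tendsto_atTop, hr₂.comp hφ₃.tendsto_atTop,
      fun n => (hsel n).1, fun n => (hsel n).2⟩
    rw [Sym2.eq_swap]; exact hrs₂ (φ₃ n)

lemma sibling_limit_image (d : ℕ) (hd : 2 ≤ d) (L : ℕ → Fin d → Chord)
    (hL : ∀ i, FullSibling d (L i)) (l : Fin d → Chord)
    (hconv : ∀ j : Fin d, Tendsto (fun i => chordDist (L i j) (l j)) atTop (nhds 0))
    (i j : Fin d) : chordMap d (l i) = chordMap d (l j) := by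
  obtain ⟨φ, p, q, r, s, a, b, r0, s0, hφ, hpq, hrs, hab, hr0s0, hp, hq, hr, hs, hdp, hdq⟩ :=
    sibling_pair_extract d hd L hL l hconv i j
  have hda : d • a = d • r0 := by
    refine tendsto_nhds_unique (f := fun n => d • p n) (l := atTop) ?_ ?_
    · exact ((continuous_sigmaA d).tendsto a).comp hp
    · have := ((continuous_sigmaA d).tendsto r0).comp hr
      simpa only [Function.comp_def, sigmaA, funext fun n => hdp n] using this
  have hdb : d • b = d • s0 := by
    refine tendsto_nhds_unique (f := fun n => d • q n) (l := atTop) ?_ ?_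
    · exact ((continuous_sigmaA d).tendsto b).comp hq
    · have := ((continuous_sigmaA d).tendsto s0).comp hs
      simpa only [Function.comp_def, sigmaA, funext fun n => hdq n] using this
  rw [← hab, ← hr0s0, chordMap_mk, chordMap_mk, hda, hdb]

end StmtTwoHelpers

/-- a Hausdorff limit of full sibling collections whose first chord is
not critical is a full sibling collection. -/
theorem stmt2 (d : ℕ) (hd : 2 ≤ d) (L : ℕ → Fin d → Chord)
    (hL : ∀ i, FullSibling d (L i)) (l : Fin d → Chord)
    (hconv : ∀ j : Fin d, Tendsto (fun i => chordDist (L i j) (l j)) atTop (nhds 0))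
    (hnc : ¬ ChordCritical d (l ⟨0, by omega⟩)) :
    FullSibling d l := by
  have himg := sibling_limit_image d hd L hL l hconv
  refine ⟨?_, himg⟩
  intro i j hij
  by_contra hndisj
  obtain ⟨z, hz1, hz2⟩ := Set.not_disjoint_iff.1 hndisj
  obtain ⟨φ, p, q, r, ss, a, b, r0, s0, hφ, hpq, hrs, hab, hr0s0, hp, hq, hr, hs, hdp, hdq⟩ :=
    sibling_pair_extract d hd L hL l hconv i j
  have hd0 : 0 < d := by omega
  have hnd : ¬ (chordMap d (l i)).IsDiag := by
    rw [himg i ⟨0, by omega⟩]; exact hnc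
  have hdab : d • a ≠ d • b := by
    intro hc; apply hnd; rw [← hab, chordMap_mk]; exact Sym2.mk_isDiag_iff.2 hc
  have hda : d • a = d • r0 := by
    refine tendsto_nhds_unique (f := fun n => d • p n) (l := atTop) ?_ ?_
    · exact ((continuous_sigmaA d).tendsto a).comp hp
    · have := ((continuous_sigmaA d).tendsto r0).comp hr
      simpa only [Function.comp_def, sigmaA, funext fun n => hdp n] using this
  have hdb : d • b = d • s0 := by
    refine tendsto_nhds_unique (f := fun n => d • q n) (l := atTop) ?_ ?_
    · exact ((continuous_sigmaA d).tendsto b).comp hq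
    · have := ((continuous_sigmaA d).tendsto s0).comp hs
      simpa only [Function.comp_def, sigmaA, funext fun n => hdq n] using this
  have hab' : a ≠ b := fun hc => hdab (by rw [hc])
  have hrs' : r0 ≠ s0 := fun hc => hdab (by rw [hda, hdb, hc])
  have hdisj : ∀ n, Disjoint (chordSet (L (φ n) i)) (chordSet (L (φ n) j)) :=
    fun n => (hL (φ n)).1 i j hij
  have hshare : ∀ (u v : ℕ → Angle) (u0 : Angle), Tendsto u atTop (nhds u0) →
      Tendsto v atTop (nhds u0) → (∀ n, d • u n = d • v n) →
      (∀ n, anglePoint (u n) ∈ chordSet (L (φ n) i)) →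
      (∀ n, anglePoint (v n) ∈ chordSet (L (φ n) j)) → False := by
    intro u v u0 hu hv hduv hmi hmj
    have huv : Tendsto (fun n => u n - v n) atTop (nhds 0) := by
      simpa using hu.sub hv
    obtain ⟨n, hn⟩ := (eventually_eq_of_torsion hd0 hduv huv).exists
    exact Set.disjoint_left.1 (hdisj n) (hmi n) (hn ▸ hmj n)
  by_cases har : a = r0
  · exact hshare p r a hp (by rw [har]; exact hr) hdp
      (fun n => by rw [← hpq n, chordSet_mk]; exact left_mem_segment ℝ _ _)
      (fun n => by rw [← hrs n, chordSet_mk]; exact left_mem_segment ℝ _ _)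
  by_cases hbs : b = s0
  · exact hshare q ss b hq (by rw [hbs]; exact hs) hdq
      (fun n => by rw [← hpq n, chordSet_mk]; exact right_mem_segment ℝ _ _)
      (fun n => by rw [← hrs n, chordSet_mk]; exact right_mem_segment ℝ _ _)
  have has : a ≠ s0 := fun hc => hdab (by rw [hc, ← hdb])
  have hbr : b ≠ r0 := fun hc => hdab (by rw [hc, ← hda]) |>.elim
  -- geometry of the limit configuration
  set A := anglePoint a with hA
  set B := anglePoint b with hB
  set R := anglePoint r0 with hR
  set S := anglePoint s0 with hS
  have hzAB : z ∈ segment ℝ A B := by rw [← hab, chordSet_mk] at hz1; exact hz1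
  have hzRS : z ∈ segment ℝ R S := by rw [← hr0s0, chordSet_mk] at hz2; exact hz2
  have hABne : A ≠ B := fun hc => hab' (anglePoint_injective hc)
  have hzA : z ≠ A := by
    intro hc
    rw [hc] at hzRS
    rcases circle_mem_segment (norm_anglePoint r0) (norm_anglePoint s0) hzRS
      (norm_anglePoint a) with h | h
    · exact har (anglePoint_injective h)
    · exact has (anglePoint_injective h)
  have hzB : z ≠ B := by
    intro hc
    rw [hc] at hzRS
    rcases circle_mem_segment (norm_anglePoint r0) (norm_anglePoint s0) hzRS
      (norm_anglePoint b) with h | h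
    · exact hbr (anglePoint_injective h)
    · exact hbs (anglePoint_injective h)
  have hzR : z ≠ R := by
    intro hc
    rw [hc] at hzAB
    rcases circle_mem_segment (norm_anglePoint a) (norm_anglePoint b) hzAB
      (norm_anglePoint r0) with h | h
    · exact har (anglePoint_injective h).symm
    · exact hbr (anglePoint_injective h).symm
  have hzS : z ≠ S := by
    intro hc
    rw [hc] at hzAB
    rcases circle_mem_segment (norm_anglePoint a) (norm_anglePoint b) hzAB
      (norm_anglePoint s0) with h | h
    · exact has (anglePoint_injective h).symm
    · exact hbs (anglePoint_injective h).symm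
  rw [segment_eq_image'] at hzAB hzRS
  obtain ⟨t, ⟨ht0, ht1⟩, hzt⟩ := hzAB
  obtain ⟨u, ⟨hu0, hu1⟩, hzu⟩ := hzRS
  have ht0' : 0 < t := by
    rcases ht0.eq_or_lt with h | h
    · exfalso; apply hzA; rw [← hzt, ← h]; module
    · exact h
  have ht1' : t < 1 := by
    rcases ht1.eq_or_lt with h | h
    · exfalso; apply hzB; rw [← hzt, h]; module
    · exact h
  set v := B - A with hv
  set w := S - R with hw
  set cc := R - A with hcc
  have hvne : v ≠ 0 := sub_ne_zero.2 (Ne.symm hABne)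
  have hkey : t • v - u • w = cc := by
    have h2 : A + t • v = R + u • w := hzt.trans hzu.symm
    rw [hcc]
    linear_combination (norm := module) h2
  have hcross : crossC v w ≠ 0 := by
    intro hc
    obtain ⟨μ, hμ⟩ := crossC_zero_parallel hvne hc
    have hRR : R = A + (t - u*μ) • (B - A) := by
      have h2 : A + t • v = R + u • (μ • v) := by rw [← hμ]; exact hzt.trans hzu.symm
      rw [smul_smul] at h2
      rw [← hv]
      linear_combination (norm := module) -h2
    rcases circle_collinear (norm_anglePoint a) (norm_anglePoint b) (norm_anglePoint r0)
      _ hRR with h | h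
    · exact har (anglePoint_injective h).symm
    · exact hbr (anglePoint_injective h).symm
  have ht : t = crossC cc w / crossC v w := by
    rw [eq_div_iff hcross]; exact (crossC_eq hkey).1
  have hu' : u = crossC cc v / crossC v w := by
    rw [eq_div_iff hcross]; exact (crossC_eq hkey).2
  -- approximating configuration
  set An : ℕ → ℂ := fun n => anglePoint (p n) with hAn
  set Bn : ℕ → ℂ := fun n => anglePoint (q n) with hBn
  set Rn : ℕ → ℂ := fun n => anglePoint (r n) with hRn
  set Sn : ℕ → ℂ := fun n => anglePoint (ss n) with hSn
  have hAt : Tendsto An atTop (nhds A) := (continuous_anglePoint.tendsto a).comp hp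
  have hBt : Tendsto Bn atTop (nhds B) := (continuous_anglePoint.tendsto b).comp hq
  have hRt : Tendsto Rn atTop (nhds R) := (continuous_anglePoint.tendsto r0).comp hr
  have hSt : Tendsto Sn atTop (nhds S) := (continuous_anglePoint.tendsto s0).comp hs
  set vn : ℕ → ℂ := fun n => Bn n - An n with hvn
  set wn : ℕ → ℂ := fun n => Sn n - Rn n with hwn
  set cn : ℕ → ℂ := fun n => Rn n - An n with hcn
  have hvt : Tendsto vn atTop (nhds v) := hBt.sub hAt
  have hwt : Tendsto wn atTop (nhds w) := hSt.sub hRt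
  have hct : Tendsto cn atTop (nhds cc) := hRt.sub hAt
  have crossT : ∀ (f g : ℕ → ℂ) (x y : ℂ), Tendsto f atTop (nhds x) →
      Tendsto g atTop (nhds y) →
      Tendsto (fun n => crossC (f n) (g n)) atTop (nhds (crossC x y)) := by
    intro f g x y hf hg
    exact (crossC_continuous.tendsto (x, y)).comp (hf.prodMk_nhds hg)
  have hDt : Tendsto (fun n => crossC (vn n) (wn n)) atTop (nhds (crossC v w)) :=
    crossT _ _ _ _ hvt hwt
  have hDne : ∀ᶠ n in atTop, crossC (vn n) (wn n) ≠ 0 := hDt.eventually_ne hcross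
  set tn : ℕ → ℝ := fun n => crossC (cn n) (wn n) / crossC (vn n) (wn n) with htn
  set un : ℕ → ℝ := fun n => crossC (cn n) (vn n) / crossC (vn n) (wn n) with hun
  have htt : Tendsto tn atTop (nhds t) := by
    rw [ht]; exact (crossT _ _ _ _ hct hwt).div hDt hcross
  have hut : Tendsto un atTop (nhds u) := by
    rw [hu']; exact (crossT _ _ _ _ hct hvt).div hDt hcross
  have hu0' : 0 < u := by
    rcases hu0.eq_or_lt with h | h
    · exfalso; apply hzR; rw [← hzu, ← h]; module
    · exact h
  have hu1' : u < 1 := by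
    rcases hu1.eq_or_lt with h | h
    · exfalso; apply hzS; rw [← hzu, h]; module
    · exact h
  have htmem : ∀ᶠ n in atTop, tn n ∈ Ioo (0:ℝ) 1 := htt (Ioo_mem_nhds ht0' ht1')
  have humem : ∀ᶠ n in atTop, un n ∈ Ioo (0:ℝ) 1 := hut (Ioo_mem_nhds hu0' hu1')
  obtain ⟨n, hD0, htI, huI⟩ := (hDne.and (htmem.and humem)).exists
  have hcr : tn n • vn n - un n • wn n = cn n := cramer hD0
  have heq : An n + tn n • vn n = Rn n + un n • wn n := by
    simp only [hcn] at hcr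
    linear_combination (norm := module) hcr
  have hm1 : An n + tn n • vn n ∈ chordSet (L (φ n) i) := by
    rw [← hpq n, chordSet_mk, segment_eq_image']
    refine ⟨tn n, ⟨htI.1.le, htI.2.le⟩, ?_⟩
    simp only [hAn, hBn, hvn]
  have hm2 : Rn n + un n • wn n ∈ chordSet (L (φ n) j) := by
    rw [← hrs n, chordSet_mk, segment_eq_image']
    refine ⟨un n, ⟨huI.1.le, huI.2.le⟩, ?_⟩
    simp only [hRn, hSn, hwn]
  rw [← heq] at hm2
  exact Set.disjoint_left.1 (hdisj n) hm1 hm2
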